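/- Let U_L and U_hat_L be d x L matrices with orthonormal columns, and set O = U_hat_L^T U_L. Then ||U_hat_L O - U_L||_2 = ||U_L^T U_hat_L_perp||_2, where U_hat_L_perp is a d x (d-L) matrix whose columns form an orthonormal basis of span(U_hat_L)^perp. In particular, ||U_hat_L O - U_L||_2^2 = ||U_L^T (I - U_hat_L U_hat_L^T) U_L||_2. -/
import Mathlib


open Matrix

open scoped Matrix.Norms.L2Operator

/-- Spectral norm of a real matrix: operator norm w.r.t. Euclidean norms. -/
noncomputable def specNorm {m n : ℕ} (M : Matrix (Fin m) (Fin n) ℝ) : ℝ :=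
  ‖LinearMap.toContinuousLinearMap (Matrix.toEuclideanLin M)‖

lemma specNorm_eq_l2 {m n : ℕ} (M : Matrix (Fin m) (Fin n) ℝ) : specNorm M = ‖M‖ :=
  (Matrix.l2_opNorm_def M).symm

lemma l2_sq {m n : ℕ} (M : Matrix (Fin m) (Fin n) ℝ) : ‖Mᵀ * M‖ = ‖M‖ * ‖M‖ := by
  have := Matrix.l2_opNorm_conjTranspose_mul_self M
  rwa [Matrix.conjTranspose_eq_transpose_of_trivial] at this

lemma l2_transpose {m n : ℕ} (M : Matrix (Fin m) (Fin n) ℝ) : ‖Mᵀ‖ = ‖M‖ := by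
  have := Matrix.l2_opNorm_conjTranspose M
  rwa [Matrix.conjTranspose_eq_transpose_of_trivial] at this

theorem stmt18 {d L : ℕ} (hLd : L ≤ d)
    (U Uh : Matrix (Fin d) (Fin L) ℝ) (hU : Uᵀ * U = 1) (hUh : Uhᵀ * Uh = 1)
    (Uhp : Matrix (Fin d) (Fin (d - L)) ℝ) (hUhp : Uhpᵀ * Uhp = 1)
    (hperp : Uhᵀ * Uhp = 0) (hspan : Uh * Uhᵀ + Uhp * Uhpᵀ = 1)
    (O : Matrix (Fin L) (Fin L) ℝ) (hO : O = Uhᵀ * U) :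
    specNorm (Uh * O - U) = specNorm (Uᵀ * Uhp) ∧
      specNorm (Uh * O - U) ^ 2 = specNorm (Uᵀ * (1 - Uh * Uhᵀ) * U) := by
  have hA : Uh * O - U = -(Uhp * (Uhpᵀ * U)) := by
    have h1 : (Uh * Uhᵀ + Uhp * Uhpᵀ) * U = U := by rw [hspan, Matrix.one_mul]
    rw [Matrix.add_mul] at h1
    rw [hO, ← Matrix.mul_assoc]
    have h2 : Uh * Uhᵀ * U = U - Uhp * Uhpᵀ * U := eq_sub_of_add_eq h1
    rw [h2, Matrix.mul_assoc]; abel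
  -- isometry: ‖Uhp * B‖ = ‖B‖
  have hiso : ∀ B : Matrix (Fin (d - L)) (Fin L) ℝ, ‖Uhp * B‖ = ‖B‖ := by
    intro B
    have h2 : (Uhp * B)ᵀ * (Uhp * B) = Bᵀ * B := by
      rw [Matrix.transpose_mul, Matrix.mul_assoc, ← Matrix.mul_assoc Uhpᵀ, hUhp,
        Matrix.one_mul]
    have h3 := l2_sq (Uhp * B)
    rw [h2, l2_sq B] at h3
    exact mul_self_inj (norm_nonneg _) (norm_nonneg _) |>.mp h3.symm
  have hperm : 1 - Uh * Uhᵀ = Uhp * Uhpᵀ := by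
    rw [← hspan]; abel
  constructor
  · rw [specNorm_eq_l2, specNorm_eq_l2, hA, norm_neg, hiso, ← l2_transpose,
      Matrix.transpose_mul, Matrix.transpose_transpose]
  · rw [specNorm_eq_l2, specNorm_eq_l2, hA, norm_neg, hiso, sq, ← l2_sq]
    congr 1
    rw [hperm, Matrix.transpose_mul, Matrix.transpose_transpose, Matrix.mul_assoc,
      Matrix.mul_assoc, Matrix.mul_assoc]
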